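/- For the Lie algebra 𝒟⁻ (differential operators anti-fixed by σ_{-,0}) with grading 𝒟⁻_k = {t^k g(D + k/2) : g ∈ ℂ[w]^{(k̄)}}, one has [𝒟⁻_1, 𝒟⁻_k] = 𝒟⁻_{k+1} for all k ∈ ℕ. -/
import Mathlib

open Polynomial


noncomputable def brPoly1k (k : ℤ) (h₁ h₂ : Polynomial ℂ) : Polynomial ℂ :=
  h₁.comp (X + C ((k : ℂ) / 2)) * h₂.comp (X - C (1 / 2 : ℂ)) -
    h₁.comp (X - C ((k : ℂ) / 2)) * h₂.comp (X + C (1 / 2 : ℂ))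

namespace DminusAux

/-- the parity submodule -/
noncomputable def paritySub (k : ℤ) : Submodule ℂ (Polynomial ℂ) where
  carrier := {q | q.comp (-X) = (-1 : ℂ) ^ k • q}
  add_mem' := by
    intro a b ha hb
    simp only [Set.mem_setOf_eq, add_comp] at *
    rw [ha, hb, smul_add]
  zero_mem' := by simp
  smul_mem' := by
    intro c a ha
    simp only [Set.mem_setOf_eq, smul_comp] at *
    rw [ha, smul_comm]

lemma comp_add_shift (h : Polynomial ℂ) (c : ℂ) :
    (h.comp (X + C c)).comp (-X) = (h.comp (-X)).comp (X - C c) := by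
  rw [comp_assoc, comp_assoc]
  congr 1
  simp only [add_comp, neg_comp, sub_comp, X_comp, C_comp]
  ring

lemma comp_sub_shift (h : Polynomial ℂ) (c : ℂ) :
    (h.comp (X - C c)).comp (-X) = (h.comp (-X)).comp (X + C c) := by
  rw [comp_assoc, comp_assoc]
  congr 1
  simp only [add_comp, neg_comp, sub_comp, X_comp, C_comp]
  ring

lemma brPoly_parity (k : ℤ) (h₁ h₂ : Polynomial ℂ)
    (e1 : h₁.comp (-X) = h₁) (e2 : h₂.comp (-X) = (-1 : ℂ) ^ (k + 1) • h₂) :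
    brPoly1k k h₁ h₂ ∈ paritySub k := by
  have hz : ((-1 : ℂ)) ^ (k + 1) = (-1 : ℂ) ^ k * (-1) := zpow_add_one₀ (by norm_num) k
  show (brPoly1k k h₁ h₂).comp (-X) = (-1 : ℂ) ^ k • brPoly1k k h₁ h₂
  simp only [brPoly1k, sub_comp, mul_comp, comp_add_shift, comp_sub_shift, e1, e2, smul_comp]
  rw [hz]
  simp only [mul_smul_comm]
  module

lemma coeff_comp_neg_X (p : Polynomial ℂ) (n : ℕ) :
    (p.comp (-X)).coeff n = (-1) ^ n * p.coeff n := by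
  induction p using Polynomial.induction_on' with
  | add p q hp hq => simp only [add_comp, coeff_add, hp, hq]; ring
  | monomial i a =>
    have hneg : (-X : Polynomial ℂ) = (-1 : ℂ) • X := by
      rw [neg_smul, one_smul]
    rw [monomial_comp, hneg, _root_.smul_pow, coeff_C_mul, coeff_smul, coeff_X_pow, coeff_monomial,
      smul_eq_mul]
    by_cases h : i = n
    · subst h; simp; ring
    · simp [h, Ne.symm h]

noncomputable def genSet (k : ℤ) : Set (Polynomial ℂ) :=
  {q' : Polynomial ℂ | ∃ h₁ h₂ : Polynomial ℂ,
    h₁.comp (-X) = h₁ ∧ h₂.comp (-X) = (-1 : ℂ) ^ (k + 1) • h₂ ∧ q' = brPoly1k k h₁ h₂}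

lemma genSet_subset_parity (k : ℤ) : genSet k ⊆ (paritySub k : Set (Polynomial ℂ)) := by
  rintro q' ⟨h₁, h₂, e1, e2, rfl⟩
  exact brPoly_parity k h₁ h₂ e1 e2

/-- The special polynomial `(X - 1/2)^n - (X + 1/2)^n`. -/
noncomputable def sp (n : ℕ) : Polynomial ℂ :=
  (X - C (1 / 2 : ℂ)) ^ n - (X + C (1 / 2 : ℂ)) ^ n

lemma sp_coeff (n j : ℕ) :
    (sp n).coeff j = (-(1 / 2 : ℂ)) ^ (n - j) * (n.choose j : ℂ)
      - (1 / 2 : ℂ) ^ (n - j) * (n.choose j : ℂ) := by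
  have : (X - C (1 / 2 : ℂ)) = X + C (-(1 / 2 : ℂ)) := by rw [C_neg]; ring
  rw [sp, coeff_sub, this, coeff_X_add_C_pow, coeff_X_add_C_pow]

lemma sp_coeff_pred (d : ℕ) : (sp (d + 1)).coeff d = -(d + 1 : ℂ) := by
  rw [sp_coeff]
  have : d + 1 - d = 1 := by omega
  rw [this, Nat.choose_succ_self_right]
  push_cast
  ring

lemma sp_coeff_high (n j : ℕ) (hj : n ≤ j) : (sp n).coeff j = 0 := by
  rw [sp_coeff]
  rcases eq_or_lt_of_le hj with h | h
  · subst h; simp [Nat.sub_self]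
  · simp [Nat.choose_eq_zero_of_lt h]

lemma sp_mem_genSet (k : ℤ) (n : ℕ) (hn : ((-1 : ℂ)) ^ n = (-1 : ℂ) ^ (k + 1)) :
    sp n ∈ genSet k := by
  refine ⟨1, X ^ n, by simp, ?_, ?_⟩
  · have hneg : (-X : Polynomial ℂ) = (-1 : ℂ) • X := by
      rw [neg_smul, one_smul]
    rw [X_pow_comp, hneg, _root_.smul_pow, hn]
  · simp [brPoly1k, one_comp, X_pow_comp, sp]

lemma parity_mem_span (k : ℤ) (d : ℕ) :
    ∀ q : Polynomial ℂ, q.natDegree ≤ d → q ∈ paritySub k →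
      q ∈ Submodule.span ℂ (genSet k) := by
  induction d using Nat.strong_induction_on with
  | _ d ih =>
    intro q hdeg hpar
    rcases eq_or_ne q 0 with rfl | hq
    · exact Submodule.zero_mem _
    set d₀ := q.natDegree with hd₀
    set a := q.leadingCoeff with ha
    have ha0 : a ≠ 0 := leadingCoeff_ne_zero.mpr hq
    have hpar' : q.comp (-X) = (-1 : ℂ) ^ k • q := hpar
    have hpow : ((-1 : ℂ)) ^ d₀ = (-1 : ℂ) ^ k := by
      have := congrArg (fun p => p.coeff d₀) hpar'
      simp only [coeff_comp_neg_X, coeff_smul, smul_eq_mul] at this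
      exact mul_right_cancel₀ ha0 this
    have hpow' : ((-1 : ℂ)) ^ (d₀ + 1) = (-1 : ℂ) ^ (k + 1) := by
      rw [pow_succ, zpow_add_one₀ (by norm_num : (-1 : ℂ) ≠ 0), hpow]
    have hsp : sp (d₀ + 1) ∈ genSet k := sp_mem_genSet k (d₀ + 1) hpow'
    have hspS : sp (d₀ + 1) ∈ Submodule.span ℂ (genSet k) := Submodule.subset_span hsp
    have hsppar : sp (d₀ + 1) ∈ paritySub k := genSet_subset_parity k hsp
    set r : Polynomial ℂ := q + (a / (d₀ + 1 : ℂ)) • sp (d₀ + 1) with hr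
    have hd₀1 : ((d₀ : ℂ) + 1) ≠ 0 := by
      exact_mod_cast Nat.cast_add_one_ne_zero (R := ℂ) d₀
    have hrcoeff : ∀ j, d₀ ≤ j → r.coeff j = 0 := by
      intro j hj
      rcases eq_or_lt_of_le hj with h | h
      · subst h
        rw [hr, coeff_add, coeff_smul, sp_coeff_pred, smul_eq_mul]
        have : q.coeff d₀ = a := rfl
        rw [this]
        field_simp
        ring
      · rw [hr, coeff_add, coeff_smul, sp_coeff_high (d₀ + 1) j (by omega),
          coeff_eq_zero_of_natDegree_lt h]
        simp
    have hrpar : r ∈ paritySub k := (paritySub k).add_mem hpar ((paritySub k).smul_mem _ hsppar)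
    have hrS : r ∈ Submodule.span ℂ (genSet k) := by
      rcases eq_or_ne r 0 with h0 | h0
      · rw [h0]; exact Submodule.zero_mem _
      · have hdr : r.natDegree < d₀ := by
          by_contra hc
          exact h0 (by
            have := hrcoeff r.natDegree (le_of_not_gt hc)
            exact leadingCoeff_eq_zero.mp this)
        exact ih r.natDegree (lt_of_lt_of_le hdr hdeg) r le_rfl hrpar
    have : q = r - (a / (d₀ + 1 : ℂ)) • sp (d₀ + 1) := by
      rw [hr, add_sub_cancel_right]
    rw [this]
    exact Submodule.sub_mem _ hrS (Submodule.smul_mem _ _ hspS)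

end DminusAux

/-- `[𝒟⁻_1, 𝒟⁻_k] = 𝒟⁻_{k+1}` for all `k ∈ ℕ`: the span of the bracket
polynomials is exactly the space of polynomials of parity `(k+1)+1 ≡ k` . -/
theorem Dminus_degree_one_brackets_generate (k : ℤ) (hk : 1 ≤ k) :
    ∀ q : Polynomial ℂ,
      q ∈ Submodule.span ℂ {q' : Polynomial ℂ | ∃ h₁ h₂ : Polynomial ℂ,
        h₁.comp (-X) = h₁ ∧ h₂.comp (-X) = (-1 : ℂ) ^ (k + 1) • h₂ ∧
        q' = brPoly1k k h₁ h₂} ↔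
      q.comp (-X) = (-1 : ℂ) ^ k • q := by
  intro q
  constructor
  · intro hq
    exact Submodule.span_le.mpr (DminusAux.genSet_subset_parity k) hq
  · intro hq
    exact DminusAux.parity_mem_span k q.natDegree q le_rfl hq
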